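/- Let q solve q''(t) = -n²q(t) + i·n·b(t)·q(t) with q(s) = 0, q'(s) = q₁, where b is continuous and bounded by β ≥ 0 on [s,T]. Then |q(t)| ≤ (|q₁|/n)·e^{β(t-s)} for all t ∈ [s,T]. -/

import Mathlib

open RealInnerProductSpace

theorem perturbed_oscillator_bound
    (n : ℕ) (hn : 0 < n) (s T : ℝ) (q₁ : ℂ) (β : ℝ) (hβ : 0 ≤ β)
    (b : ℝ → ℝ) (hb : Continuous b) (hbβ : ∀ τ ∈ Set.Icc s T, |b τ| ≤ β)
    (q : ℝ → ℂ) (hq : ContDiff ℝ 2 q)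
    (hode : ∀ t : ℝ, deriv (deriv q) t
      = -(n : ℂ)^2 * q t + Complex.I * (n : ℂ) * (b t : ℂ) * q t)
    (hq0 : q s = 0) (hq1 : deriv q s = q₁) :
    ∀ t ∈ Set.Icc s T, ‖q t‖ ≤ (‖q₁‖ / n) * Real.exp (β * (t - s)) := by
  -- Derivative facts
  have hqdiff : Differentiable ℝ q := hq.differentiable (by norm_num)
  have hq' : ContDiff ℝ 1 (deriv q) := by
    have h : ContDiff ℝ ((1:ℕ)+1) q := by norm_num; exact hq
    exact (contDiff_succ_iff_deriv.mp h).2.2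
  have hq'diff : Differentiable ℝ (deriv q) := hq'.differentiable (by norm_num)
  have hD : ∀ t, HasDerivAt q (deriv q t) t := fun t => (hqdiff t).hasDerivAt
  have hD2 : ∀ t, HasDerivAt (deriv q) (deriv (deriv q) t) t :=
    fun t => (hq'diff t).hasDerivAt
  -- Energy
  set E : ℝ → ℝ := fun t => (n:ℝ)^2 * ⟪q t, q t⟫ + ⟪deriv q t, deriv q t⟫ with hEdef
  have hEderiv : ∀ t, HasDerivAt E
      (2 * (n:ℝ) * b t * ⟪deriv q t, Complex.I * q t⟫) t := by
    intro t
    have h1 : HasDerivAt (fun t => (n:ℝ)^2 * ⟪q t, q t⟫)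
        ((n:ℝ)^2 * (⟪q t, deriv q t⟫ + ⟪deriv q t, q t⟫)) t :=
      ((hD t).inner ℝ (hD t)).const_mul _
    have h2 : HasDerivAt (fun t => ⟪deriv q t, deriv q t⟫)
        (⟪deriv q t, deriv (deriv q) t⟫ + ⟪deriv (deriv q) t, deriv q t⟫) t :=
      (hD2 t).inner ℝ (hD2 t)
    have h3 := h1.add h2
    convert h3 using 1
    case e'_4 => rfl
    case e'_5 => rfl
    case e'_8 => rfl
    have hsub : deriv (deriv q) t
        = (-(n:ℝ)^2 : ℝ) • q t + ((n:ℝ) * b t) • (Complex.I * q t) := by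
      rw [hode t]; push_cast [Complex.real_smul]; ring
    rw [hsub]
    simp only [inner_add_right, inner_add_left, real_inner_smul_right, real_inner_smul_left]
    rw [real_inner_comm (Complex.I * q t) (deriv q t),
        real_inner_comm (q t) (deriv q t)]
    ring
  have hEdiff : Differentiable ℝ E := fun t => (hEderiv t).differentiableAt
  -- Grönwall
  have hgron : ∀ t ∈ Set.Icc s T, E t ≤ gronwallBound (‖q₁‖^2) β 0 (t - s) := by
    apply le_gronwallBound_of_liminf_deriv_right_le
      (f' := fun t => 2 * (n:ℝ) * b t * ⟪deriv q t, Complex.I * q t⟫)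
    · exact hEdiff.continuous.continuousOn
    · intro x hx r hr
      exact (hEderiv x).hasDerivWithinAt.liminf_right_slope_le hr
    · simp [hEdef, hq0, hq1, real_inner_self_eq_norm_sq]
    · intro x hx
      have hbb : |b x| ≤ β := hbβ x ⟨hx.1, hx.2.le⟩
      have hCS : |⟪deriv q x, Complex.I * q x⟫| ≤ ‖deriv q x‖ * ‖Complex.I * q x‖ :=
        abs_real_inner_le_norm _ _
      have hIq : ‖Complex.I * q x‖ = ‖q x‖ := by
        rw [norm_mul, Complex.norm_I, one_mul]
      rw [hIq] at hCS
      have hinner : b x * ⟪deriv q x, Complex.I * q x⟫ ≤ β * (‖deriv q x‖ * ‖q x‖) := by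
        calc b x * ⟪deriv q x, Complex.I * q x⟫
            ≤ |b x * ⟪deriv q x, Complex.I * q x⟫| := le_abs_self _
          _ = |b x| * |⟪deriv q x, Complex.I * q x⟫| := abs_mul _ _
          _ ≤ β * (‖deriv q x‖ * ‖q x‖) := by
              apply mul_le_mul hbb hCS (abs_nonneg _)
              exact hβ
      have hEx : E x = (n:ℝ)^2 * ‖q x‖^2 + ‖deriv q x‖^2 := by
        simp [hEdef, real_inner_self_eq_norm_sq]
      rw [hEx, add_zero]
      have hn1 : (1:ℝ) ≤ n := by exact_mod_cast hn
      nlinarith [mul_nonneg hβ (sq_nonneg ((n:ℝ) * ‖q x‖ - ‖deriv q x‖)),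
        mul_le_mul_of_nonneg_left hinner (by positivity : (0:ℝ) ≤ 2 * (n:ℝ)),
        mul_nonneg hβ (mul_nonneg (norm_nonneg (deriv q x)) (norm_nonneg (q x))),
        sq_nonneg ((n:ℝ) - 1), mul_nonneg (mul_nonneg hβ (sub_nonneg.mpr hn1))
          (mul_nonneg (norm_nonneg (deriv q x)) (norm_nonneg (q x)))]
  -- Conclusion
  intro t ht
  have hEt := hgron t ht
  rw [gronwallBound_ε0] at hEt
  have hEx : E t = (n:ℝ)^2 * ‖q t‖^2 + ‖deriv q t‖^2 := by
    simp [hEdef, real_inner_self_eq_norm_sq]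
  have hnpos : (0:ℝ) < n := by exact_mod_cast hn
  have hexp1 : (1:ℝ) ≤ Real.exp (β * (t - s)) := by
    rw [Real.one_le_exp_iff]
    exact mul_nonneg hβ (sub_nonneg.mpr ht.1)
  have hsq : ‖q t‖^2 ≤ ((‖q₁‖ / n) * Real.exp (β * (t - s)))^2 := by
    have h1 : (n:ℝ)^2 * ‖q t‖^2 ≤ ‖q₁‖^2 * Real.exp (β * (t - s)) := by
      nlinarith [sq_nonneg (‖deriv q t‖), hEt, hEx.symm.le]
    have h2 : ‖q₁‖^2 * Real.exp (β * (t - s))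
        ≤ ‖q₁‖^2 * (Real.exp (β * (t - s)))^2 := by
      nlinarith [sq_nonneg (‖q₁‖),
        mul_nonneg (Real.exp_pos (β * (t - s))).le (sub_nonneg.mpr hexp1)]
    rw [mul_pow, div_pow]
    rw [div_mul_eq_mul_div, le_div_iff₀ (by positivity)]
    nlinarith
  have hR : (0:ℝ) ≤ (‖q₁‖ / n) * Real.exp (β * (t - s)) := by positivity
  have := Real.sqrt_le_sqrt hsq
  rwa [Real.sqrt_sq (norm_nonneg _), Real.sqrt_sq hR] at this
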